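/- The channel complementary to a Schur-product channel, defined by D^c_C(ρ) = Tr_1(U(ρ ⊗ |0⟩⟨0|)U†) with U = Σ_i |i⟩⟨i| ⊗ U_i, equals ρ ↦ Σ_i ρ_ii |ψ_i⟩⟨ψ_i| where |ψ_i⟩ = U_i|0⟩; in particular it is a measure-and-prepare (entanglement-breaking) channel. -/

import Mathlib

open Matrix
open scoped Kronecker ComplexOrder

noncomputable section

/-- The Schur-product (Hadamard-product) superoperator `X ↦ X ∘ C`. -/
def schurMap {d : ℕ} (C : Matrix (Fin d) (Fin d) ℂ) :
    Matrix (Fin d) (Fin d) ℂ →ₗ[ℂ] Matrix (Fin d) (Fin d) ℂ where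
  toFun X := X.hadamard C
  map_add' X Y := by ext i j; simp [Matrix.hadamard]; ring
  map_smul' c X := by ext i j; simp [Matrix.hadamard]; ring

/-- The extension `E ⊗ I_n` of a superoperator, applied to a bipartite matrix. -/
def tensExt {d : ℕ} (E : Matrix (Fin d) (Fin d) ℂ →ₗ[ℂ] Matrix (Fin d) (Fin d) ℂ) (n : ℕ)
    (ρ : Matrix (Fin d × Fin n) (Fin d × Fin n) ℂ) :
    Matrix (Fin d × Fin n) (Fin d × Fin n) ℂ :=
  Matrix.of fun p q => ∑ i, ∑ j, (E (Matrix.single i j 1)) p.1 q.1 * ρ (i, p.2) (j, q.2)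

/-- Complete positivity: every extension `E ⊗ I_n` preserves positive semidefiniteness. -/
def IsCP {d : ℕ} (E : Matrix (Fin d) (Fin d) ℂ →ₗ[ℂ] Matrix (Fin d) (Fin d) ℂ) : Prop :=
  ∀ (n : ℕ) (ρ : Matrix (Fin d × Fin n) (Fin d × Fin n) ℂ),
    ρ.PosSemidef → (tensExt E n ρ).PosSemidef

/-- Trace preservation. -/
def IsTP {d : ℕ} (E : Matrix (Fin d) (Fin d) ℂ →ₗ[ℂ] Matrix (Fin d) (Fin d) ℂ) : Prop :=
  ∀ X, (E X).trace = X.trace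

/-- Quantum channel: completely positive and trace-preserving. -/
def IsCPTP {d : ℕ} (E : Matrix (Fin d) (Fin d) ℂ →ₗ[ℂ] Matrix (Fin d) (Fin d) ℂ) : Prop :=
  IsCP E ∧ IsTP E

/-- The Jamiołkowski matrix `J(E) = (E ⊗ I)(|Ψ⟩⟨Ψ|)`, with entries
`J(E)_{(i,k),(j,l)} = E(|k⟩⟨l|)_{i j} / d`. -/
def jam {d : ℕ} (E : Matrix (Fin d) (Fin d) ℂ →ₗ[ℂ] Matrix (Fin d) (Fin d) ℂ) :
    Matrix (Fin d × Fin d) (Fin d × Fin d) ℂ :=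
  Matrix.of fun p q => (E (Matrix.single p.2 q.2 1)) p.1 q.1 / d

/-- Controlled unitary `U = Σ_i |i⟩⟨i| ⊗ U_i`. -/
def ctrl {d n : ℕ} (Us : Fin d → Matrix (Fin n) (Fin n) ℂ) :
    Matrix (Fin d × Fin n) (Fin d × Fin n) ℂ :=
  Matrix.of fun p q => (if p.1 = q.1 then (1 : ℂ) else 0) * (Us p.1) p.2 q.2


lemma psd_vmv_aux {d : ℕ} (w : Fin d → ℂ) : (vecMulVec w (star w)).PosSemidef := by
  have h : vecMulVec w (star w) = replicateCol (Fin 1) w * (replicateCol (Fin 1) w)ᴴ := by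
    rw [vecMulVec_eq (Fin 1)]; rfl
  rw [h]; exact posSemidef_self_mul_conjTranspose _

lemma main_aux {d : ℕ} (Us : Fin d → Matrix (Fin d) (Fin d) ℂ)
    (v : Fin d → ℂ) (ρ : Matrix (Fin d) (Fin d) ℂ) :
    (Matrix.of fun a b =>
        ∑ i, (ctrl Us * (ρ ⊗ₖ vecMulVec v (star v)) * (ctrl Us)ᴴ) (i, a) (i, b)) =
      ∑ i, ρ i i • vecMulVec ((Us i) *ᵥ v) (star ((Us i) *ᵥ v)) := by
  ext a b
  simp only [of_apply, Matrix.mul_apply, ctrl, conjTranspose_apply, kroneckerMap_apply,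
    vecMulVec_apply, Matrix.sum_apply, Matrix.smul_apply, mulVec, dotProduct,
    Fintype.sum_prod_type, of_apply, Pi.star_apply, smul_eq_mul, star_mul', ite_mul, one_mul,
    zero_mul, mul_ite, mul_zero, mul_one, apply_ite (starRingEnd ℂ), _root_.map_one,
    _root_.map_zero, Finset.sum_ite_eq, Finset.sum_ite_eq', Finset.mem_univ, if_true]
  refine Finset.sum_congr rfl fun x _ => ?_
  simp only [Finset.sum_ite_irrel, Finset.sum_const_zero, apply_ite (starRingEnd ℂ),
    apply_ite (star : ℂ → ℂ), star_zero,
    _root_.map_zero, mul_ite, mul_zero, ite_mul, zero_mul, Finset.sum_ite_eq,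
    Finset.mem_univ, if_true, map_sum, star_mul']
  simp only [star_sum, star_mul', Finset.mul_sum, Finset.sum_mul]
  refine Finset.sum_congr rfl fun c _ => Finset.sum_congr rfl fun e _ => by ring

/-- the complementary channel of a Schur-product channel equals
`ρ ↦ Σ_i ρ_ii |ψ_i⟩⟨ψ_i|` with `|ψ_i⟩ = U_i|0⟩`; in particular it is of
measure-and-prepare form. -/
theorem stmt4 (d : ℕ) (Us : Fin d → Matrix (Fin d) (Fin d) ℂ)
    (hU : ∀ i, Us i ∈ Matrix.unitaryGroup (Fin d) ℂ)
    (v : Fin d → ℂ) (hv : ∑ x, star (v x) * v x = 1)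
    (ρ : Matrix (Fin d) (Fin d) ℂ) :
    (Matrix.of fun a b =>
        ∑ i, (ctrl Us * (ρ ⊗ₖ vecMulVec v (star v)) * (ctrl Us)ᴴ) (i, a) (i, b)) =
      ∑ i, ρ i i • vecMulVec ((Us i) *ᵥ v) (star ((Us i) *ᵥ v)) ∧
    ∃ σ : Fin d → Matrix (Fin d) (Fin d) ℂ, (∀ i, (σ i).PosSemidef) ∧
      (Matrix.of fun a b =>
        ∑ i, (ctrl Us * (ρ ⊗ₖ vecMulVec v (star v)) * (ctrl Us)ᴴ) (i, a) (i, b)) =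
        ∑ i, ρ i i • σ i := by
  refine ⟨main_aux Us v ρ, fun i => vecMulVec ((Us i) *ᵥ v) (star ((Us i) *ᵥ v)),
    fun i => psd_vmv_aux _, main_aux Us v ρ⟩

end
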